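/- Let m, k be integers with 1 ≤ k ≤ m, let S be a nonempty subset of {1,...,k}, and let f_{(m,k)} be the associated function on 𝔽_3^m. For every v ∈ 𝔽_3^m with wt(v) = i ≥ 1, the real part of the Walsh transform of f_{(m,k)} at v equals -(3/2)·Σ_{t=1}^{k} K_t(i, m). -/

import Mathlib

open Finset Polynomial

/-- `ζ = exp(2πi/3)`, a primitive cube root of unity. -/
noncomputable def zeta3 : ℂ := Complex.exp (2 * Real.pi * Complex.I / 3)

/-- The Walsh transform of `h : 𝔽_3^m → 𝔽_3` at `w ∈ 𝔽_3^m`: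
`ĥ(w) = Σ_{x ∈ 𝔽_3^m} ζ^{h(x) - w·x}`. -/
noncomputable def walsh {m : ℕ} (h : (Fin m → ZMod 3) → ZMod 3)
    (w : Fin m → ZMod 3) : ℂ :=
  ∑ x : Fin m → ZMod 3, zeta3 ^ (h x - ∑ i, w i * x i).val

/-- The function `f_{(m,k)} : 𝔽_3^m → 𝔽_3` attached to a subset `S ⊆ {1,…,k}`:
`-1` if `wt(x) ∈ S`, `1` if `wt(x) ∈ {1,…,k} \ S`, `0` otherwise. -/
def fmk {m : ℕ} (k : ℕ) (S : Finset ℕ) (x : Fin m → ZMod 3) : ZMod 3 :=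
  if hammingNorm x ∈ S then -1
  else if hammingNorm x ∈ Finset.Icc 1 k then 1
  else 0

/-- The ternary Krawtchouk polynomial
`K_t(i,m) = Σ_{j=0}^{t} (-1)^j·2^{t-j}·C(i,j)·C(m-i,t-j)`. -/
def kraw (t i m : ℕ) : ℤ :=
  ∑ j ∈ Finset.range (t + 1),
    (-1 : ℤ) ^ j * 2 ^ (t - j) * (i.choose j : ℤ) * ((m - i).choose (t - j) : ℤ)

/-! ### Auxiliary lemmas about `zeta3` -/

lemma zeta3_pow_three : zeta3 ^ 3 = 1 := by
  rw [zeta3, ← Complex.exp_nat_mul]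
  rw [show (3:ℕ) * (2 * Real.pi * Complex.I / 3) = 2 * Real.pi * Complex.I by push_cast; ring]
  exact Complex.exp_two_pi_mul_I

lemma zeta3_re : zeta3.re = -(1/2) := by
  have : zeta3 = Complex.exp ((2 * Real.pi / 3 : ℝ) * Complex.I) := by
    rw [zeta3]; push_cast; ring_nf
  rw [this, Complex.exp_ofReal_mul_I_re]
  rw [show 2 * Real.pi / 3 = Real.pi - Real.pi / 3 by ring, Real.cos_pi_sub,
    Real.cos_pi_div_three]

lemma zeta3_ne_one : zeta3 ≠ 1 := by
  intro h
  have := zeta3_re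
  rw [h] at this
  norm_num at this

lemma zeta3_sum : 1 + zeta3 + zeta3 ^ 2 = 0 := by
  have h : (zeta3 - 1) * (zeta3 ^ 2 + zeta3 + 1) = 0 := by
    have := zeta3_pow_three; ring_nf; linear_combination this
  rcases mul_eq_zero.1 h with h1 | h2
  · exact absurd (by linear_combination h1) zeta3_ne_one
  · linear_combination h2

lemma zeta3_sq_re : (zeta3 ^ 2).re = -(1/2) := by
  have := congrArg Complex.re zeta3_sum
  simp [zeta3_re] at this
  linarith

/-! ### The character `psi` -/

noncomputable def psi (a : ZMod 3) : ℂ := zeta3 ^ a.val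

lemma psi_zero : psi 0 = 1 := by simp [psi]
lemma psi_one : psi 1 = zeta3 := by
  rw [psi, show ((1:ZMod 3)).val = 1 by decide, pow_one]
lemma psi_two : psi 2 = zeta3 ^ 2 := by
  rw [psi, show ((2:ZMod 3)).val = 2 by decide]

lemma psi_add (a b : ZMod 3) : psi (a + b) = psi a * psi b := by
  rw [psi, psi, psi, ← pow_add, ZMod.val_add, ← pow_eq_pow_mod _ zeta3_pow_three]

lemma psi_sum {α : Type*} (s : Finset α) (f : α → ZMod 3) :
    psi (∑ j ∈ s, f j) = ∏ j ∈ s, psi (f j) := by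
  induction s using Finset.cons_induction with
  | empty => simpa using psi_zero
  | cons a s ha ih => rw [Finset.sum_cons, Finset.prod_cons, psi_add, ih]

lemma psi_re (a : ZMod 3) :
    (psi a).re = (3 * (if a = 0 then (1:ℝ) else 0) - 1) / 2 := by
  by_cases h : a = 0
  · rw [h, psi_zero]; norm_num
  · have h1 : a = 1 ∨ a = 2 := by
      revert h; exact (by decide : ∀ c : ZMod 3, ¬ c = 0 → c = 1 ∨ c = 2) a
    rw [if_neg h]
    rcases h1 with h1 | h1 <;> rw [h1]
    · rw [psi_one, zeta3_re]; norm_num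
    · rw [psi_two, zeta3_sq_re]; norm_num

lemma re_key (a b : ZMod 3) :
    (psi (a - b)).re + (psi (a + b)).re = (if a = 0 then (2:ℝ) else -1) * (psi b).re := by
  have key : ∀ a b : ZMod 3,
      3 * ((if a - b = 0 then (1:ℤ) else 0) + (if a + b = 0 then (1:ℤ) else 0)) - 2 =
        (3 * (if a = 0 then (1:ℤ) else 0) - 1) * (3 * (if b = 0 then (1:ℤ) else 0) - 1) := by
    decide
  have k := congrArg (Int.cast : ℤ → ℝ) (key a b)
  push_cast [apply_ite (Int.cast : ℤ → ℝ)] at k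
  rw [psi_re, psi_re, psi_re,
    show (if a = 0 then (2:ℝ) else -1) = 3 * (if a = 0 then (1:ℝ) else 0) - 1 by
      split_ifs <;> norm_num]
  linear_combination k / 2

/-! ### Sum over `ZMod 3` -/

lemma zmod3_sum (g : ZMod 3 → Polynomial ℂ) : ∑ a : ZMod 3, g a = g 0 + g 1 + g 2 := by
  have : (univ : Finset (ZMod 3)) = {0, 1, 2} := by decide
  rw [this, Finset.sum_insert (by decide), Finset.sum_insert (by decide),
    Finset.sum_singleton, add_assoc]

lemma factor_eq (c : ZMod 3) :
    ∑ a : ZMod 3, (C (psi (c * a)) * X ^ (if a ≠ 0 then 1 else 0) : ℂ[X]) =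
      if c = 0 then 1 + 2 * X else 1 - X := by
  rw [zmod3_sum]
  rw [show (if (0:ZMod 3) ≠ 0 then 1 else 0) = 0 by norm_num,
    show (if (1:ZMod 3) ≠ 0 then 1 else 0) = 1 by simp [(by decide : (1:ZMod 3) ≠ 0)],
    show (if (2:ZMod 3) ≠ 0 then 1 else 0) = 1 by simp [(by decide : (2:ZMod 3) ≠ 0)]]
  by_cases h : c = 0
  · rw [if_pos h, h]
    simp only [zero_mul, psi_zero, map_one]
    ring
  · rw [if_neg h]
    have h1 : c = 1 ∨ c = 2 := by
      revert h; exact (by decide : ∀ c : ZMod 3, ¬ c = 0 → c = 1 ∨ c = 2) c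
    have hzz : zeta3 + zeta3 ^ 2 = -1 := by linear_combination zeta3_sum
    rcases h1 with h1 | h1 <;> rw [h1]
    · rw [show (1:ZMod 3) * 0 = 0 from mul_zero 1, show (1:ZMod 3) * 1 = 1 by decide,
        show (1:ZMod 3) * 2 = 2 by decide, psi_zero, psi_one, psi_two]
      rw [map_one, pow_zero, pow_one, mul_one, add_assoc, ← add_mul, ← C_add, hzz]
      rw [show (C (-1 : ℂ)) = -1 by simp]
      ring
    · rw [show (2:ZMod 3) * 0 = 0 from mul_zero 2, show (2:ZMod 3) * 1 = 2 by decide,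
        show (2:ZMod 3) * 2 = 1 by decide, psi_zero, psi_one, psi_two]
      rw [map_one, pow_zero, pow_one, mul_one, add_assoc, ← add_mul, ← C_add,
        show zeta3 ^ 2 + zeta3 = -1 by linear_combination zeta3_sum]
      rw [show (C (-1 : ℂ)) = -1 by simp]
      ring

lemma hammingNorm_eq_sum {m : ℕ} (x : Fin m → ZMod 3) :
    hammingNorm x = ∑ j, (if x j ≠ 0 then 1 else 0) := by
  rw [hammingNorm, Finset.card_filter]

/-! ### The generating polynomial -/

lemma Q_eq (m : ℕ) (v : Fin m → ZMod 3) :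
    ∑ x : Fin m → ZMod 3, (C (psi (∑ j, v j * x j)) * X ^ hammingNorm x : ℂ[X]) =
      (1 + 2 * X) ^ (m - hammingNorm v) * (1 - X) ^ hammingNorm v := by
  have hterm : ∀ x : Fin m → ZMod 3,
      (C (psi (∑ j, v j * x j)) * X ^ hammingNorm x : ℂ[X]) =
        ∏ j, (C (psi (v j * x j)) * X ^ (if x j ≠ 0 then 1 else 0)) := by
    intro x
    rw [psi_sum, map_prod, hammingNorm_eq_sum, ← Finset.prod_pow_eq_pow_sum,
      ← Finset.prod_mul_distrib]
  simp only [hterm]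
  have hps := Finset.prod_univ_sum (fun _ : Fin m => (univ : Finset (ZMod 3)))
    (fun j a => (C (psi (v j * a)) * X ^ (if a ≠ 0 then 1 else 0) : ℂ[X]))
  rw [Fintype.piFinset_univ] at hps
  rw [← hps]
  have hfac : ∀ j : Fin m, (∑ a : ZMod 3, (C (psi (v j * a)) * X ^ (if a ≠ 0 then 1 else 0) : ℂ[X]))
      = if v j = 0 then 1 + 2 * X else 1 - X := fun j => factor_eq (v j)
  rw [Finset.prod_congr rfl (fun j _ => hfac j), Finset.prod_ite (fun _ => (1 + 2 * X : ℂ[X]))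
    (fun _ => (1 - X : ℂ[X])), Finset.prod_const, Finset.prod_const]
  have hcard : (univ.filter fun j => ¬ v j = 0).card = hammingNorm v := by
    rw [hammingNorm]
  have hcard2 : (univ.filter fun j => v j = 0).card = m - hammingNorm v := by
    have := Finset.card_filter_add_card_filter_not (s := (univ : Finset (Fin m)))
      (p := fun j => v j = 0)
    simp only [Finset.card_univ, Fintype.card_fin] at this
    omega
  rw [hcard, hcard2]

lemma coeff_one_add_two_X_pow (n a : ℕ) :
    ((1 + 2 * X : ℂ[X]) ^ n).coeff a = 2 ^ a * (n.choose a : ℂ) := by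
  have hC2 : (C 2 : ℂ[X]) = 2 := by
    rw [show (2:ℂ) = ((2:ℕ):ℂ) by norm_num, C_eq_natCast]; norm_num
  have h : (1 + 2 * X : ℂ[X]) = C 2 * (X + C 2⁻¹) := by
    rw [mul_add, ← C_mul, mul_inv_cancel₀ (by norm_num : (2:ℂ) ≠ 0), C_1, hC2]; ring
  rw [h, mul_pow, ← C_pow, coeff_C_mul, coeff_X_add_C_pow]
  by_cases hle : a ≤ n
  · have h2 : (2:ℂ) ^ n = 2 ^ a * 2 ^ (n - a) := by
      rw [← pow_add, Nat.add_sub_cancel' hle]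
    rw [h2, inv_pow]
    have : ((2:ℂ) ^ (n - a)) ≠ 0 := pow_ne_zero _ (by norm_num)
    field_simp
  · rw [Nat.choose_eq_zero_of_lt (by omega)]
    push_cast
    ring

lemma coeff_one_sub_X_pow (n a : ℕ) :
    ((1 - X : ℂ[X]) ^ n).coeff a = (-1) ^ a * (n.choose a : ℂ) := by
  have h : (1 - X : ℂ[X]) = C (-1) * (X + C (-1)) := by
    rw [mul_add, ← C_mul, show ((-1:ℂ)) * (-1) = 1 by ring, C_1,
      show (C (-1) : ℂ[X]) = -1 by simp]; ring
  rw [h, mul_pow, ← C_pow, coeff_C_mul, coeff_X_add_C_pow]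
  by_cases hle : a ≤ n
  · have h2 : ((-1:ℂ)) ^ n * (-1) ^ (n - a) = (-1) ^ a := by
      rw [← pow_add, show n + (n - a) = 2 * (n - a) + a by omega, pow_add, pow_mul]
      norm_num
    rw [← mul_assoc, h2]
  · rw [Nat.choose_eq_zero_of_lt (by omega)]
    push_cast
    ring

lemma coeff_prod_eq_kraw (m i t : ℕ) (him : i ≤ m) :
    (((1 + 2 * X : ℂ[X]) ^ (m - i) * (1 - X) ^ i).coeff t) = (kraw t i m : ℂ) := by
  rw [Polynomial.coeff_mul, Finset.Nat.sum_antidiagonal_eq_sum_range_succ_mk]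
  have : ∀ p ∈ Finset.range (t + 1),
      ((1 + 2 * X : ℂ[X]) ^ (m - i)).coeff p * ((1 - X : ℂ[X]) ^ i).coeff (t - p) =
        2 ^ p * ((m - i).choose p : ℂ) * ((-1) ^ (t - p) * (i.choose (t - p) : ℂ)) := by
    intro p _
    rw [coeff_one_add_two_X_pow, coeff_one_sub_X_pow]
  rw [Finset.sum_congr rfl this]
  rw [← Finset.sum_range_reflect]
  rw [kraw]
  push_cast
  apply Finset.sum_congr rfl
  intro j hj
  have hjt : j ≤ t := by simp at hj; omega
  rw [Nat.sub_sub_self hjt]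
  ring

/-! ### Main theorem -/

theorem stmt_7 (m k : ℕ) (hk1 : 1 ≤ k) (hkm : k ≤ m)
    (S : Finset ℕ) (hS : S.Nonempty) (hSsub : S ⊆ Finset.Icc 1 k)
    (v : Fin m → ZMod 3) (i : ℕ) (hvi : hammingNorm v = i) (hi1 : 1 ≤ i) :
    (walsh (fmk (m := m) k S) v).re =
      -(3 / 2) * ∑ t ∈ Finset.Icc 1 k, (kraw t i m : ℝ) := by
  have him : i ≤ m := by
    rw [← hvi, hammingNorm]
    exact (Finset.card_filter_le _ _).trans (by simp)
  set f := fmk (m := m) k S with hf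
  set L : (Fin m → ZMod 3) → ZMod 3 := fun x => ∑ j, v j * x j with hL
  -- the generating polynomial
  have hQ : ∑ x : Fin m → ZMod 3, (C (psi (L x)) * X ^ hammingNorm x : ℂ[X]) =
      (1 + 2 * X) ^ (m - i) * (1 - X) ^ i := by
    rw [hL, ← hvi]; exact Q_eq m v
  -- step A: real part of walsh as a sum
  have hW : (walsh f v).re = ∑ x : Fin m → ZMod 3, (psi (f x - L x)).re := by
    rw [walsh, Complex.re_sum]; rfl
  -- step B: pairing x ↦ -x
  have hfneg : ∀ x : Fin m → ZMod 3, f (-x) = f x := by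
    intro x
    have : hammingNorm (-x) = hammingNorm x := by
      simp [hammingNorm, neg_ne_zero]
    rw [hf, fmk, fmk, this]
  have hLneg : ∀ x : Fin m → ZMod 3, L (-x) = -L x := by
    intro x
    rw [hL]
    simp [← Finset.sum_neg_distrib, mul_neg]
  have hpair : ∑ x : Fin m → ZMod 3, (psi (f x - L x)).re =
      ∑ x : Fin m → ZMod 3, (psi (f x + L x)).re := by
    have := Equiv.sum_comp (Equiv.neg (Fin m → ZMod 3))
      (fun x => (psi (f x + L x)).re)
    rw [← this]
    apply Finset.sum_congr rfl
    intro x _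
    simp only [Equiv.neg_apply, hfneg, hLneg]
    rw [← sub_eq_add_neg]
  -- step C: combine
  have h2W : 2 * (walsh f v).re =
      ∑ x : Fin m → ZMod 3, (if f x = 0 then (2:ℝ) else -1) * (psi (L x)).re := by
    rw [two_mul, hW]
    nth_rewrite 2 [hpair]
    rw [← Finset.sum_add_distrib]
    exact Finset.sum_congr rfl fun x _ => re_key (f x) (L x)
  -- identify the weight indicator
  have hind : ∀ x : Fin m → ZMod 3, (if f x = 0 then (2:ℝ) else -1) =
      2 - 3 * (if hammingNorm x ∈ Finset.Icc 1 k then (1:ℝ) else 0) := by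
    intro x
    rw [hf, fmk]
    by_cases h1 : hammingNorm x ∈ S
    · rw [if_pos h1, if_neg (by decide : ¬ (-1:ZMod 3) = 0), if_pos (hSsub h1)]
      norm_num
    · rw [if_neg h1]
      by_cases h2 : hammingNorm x ∈ Finset.Icc 1 k
      · rw [if_pos h2, if_neg (by decide : ¬ (1:ZMod 3) = 0), if_pos h2]
        norm_num
      · rw [if_neg h2, if_pos rfl, if_neg h2]
        norm_num
  -- step D: full character sum vanishes
  have hfull : ∑ x : Fin m → ZMod 3, (psi (L x)).re = 0 := by
    have h := congrArg (Polynomial.eval 1) hQ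
    rw [Polynomial.eval_finset_sum] at h
    simp only [Polynomial.eval_mul, Polynomial.eval_pow, Polynomial.eval_C,
      Polynomial.eval_X, Polynomial.eval_add, Polynomial.eval_sub, Polynomial.eval_one,
      Polynomial.eval_ofNat, one_pow, mul_one] at h
    rw [show (1:ℂ) - 1 = 0 by ring, zero_pow (by omega : i ≠ 0), mul_zero] at h
    calc ∑ x : Fin m → ZMod 3, (psi (L x)).re
        = (∑ x : Fin m → ZMod 3, psi (L x)).re := (Complex.re_sum _ _).symm
      _ = (0:ℂ).re := by rw [h]
      _ = 0 := rfl
  -- step E: per-weight sums are Krawtchouk numbers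
  have hcoeff : ∀ t : ℕ, ∑ x ∈ univ.filter (fun x : Fin m → ZMod 3 => hammingNorm x = t),
      (psi (L x)).re = (kraw t i m : ℝ) := by
    intro t
    have hc := congrArg (fun p : ℂ[X] => p.coeff t) hQ
    rw [Polynomial.finset_sum_coeff, coeff_prod_eq_kraw m i t him] at hc
    have hterm : ∀ x : Fin m → ZMod 3, (C (psi (L x)) * X ^ hammingNorm x : ℂ[X]).coeff t =
        if hammingNorm x = t then psi (L x) else 0 := by
      intro x
      rw [Polynomial.coeff_C_mul, Polynomial.coeff_X_pow]
      by_cases h : hammingNorm x = t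
      · rw [if_pos h, if_pos h.symm, mul_one]
      · rw [if_neg h, if_neg (fun hh => h hh.symm), mul_zero]
    rw [Finset.sum_congr rfl (fun x _ => hterm x), ← Finset.sum_filter] at hc
    calc ∑ x ∈ univ.filter (fun x : Fin m → ZMod 3 => hammingNorm x = t), (psi (L x)).re
        = (∑ x ∈ univ.filter (fun x : Fin m → ZMod 3 => hammingNorm x = t), psi (L x)).re :=
          (Complex.re_sum _ _).symm
      _ = ((kraw t i m : ℂ)).re := by rw [hc]
      _ = (kraw t i m : ℝ) := by simp
  -- step F: the Icc-filtered sum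
  have hicc : ∑ x : Fin m → ZMod 3,
      (if hammingNorm x ∈ Finset.Icc 1 k then (1:ℝ) else 0) * (psi (L x)).re =
      ∑ t ∈ Finset.Icc 1 k, (kraw t i m : ℝ) := by
    have h1 : ∑ x : Fin m → ZMod 3,
        (if hammingNorm x ∈ Finset.Icc 1 k then (1:ℝ) else 0) * (psi (L x)).re =
        ∑ x ∈ univ.filter (fun x : Fin m → ZMod 3 => hammingNorm x ∈ Finset.Icc 1 k),
          (psi (L x)).re := by
      rw [Finset.sum_filter]
      apply Finset.sum_congr rfl
      intro x _
      split_ifs <;> ring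
    rw [h1]
    have hmap : ∀ x ∈ univ.filter (fun x : Fin m → ZMod 3 => hammingNorm x ∈ Finset.Icc 1 k),
        hammingNorm x ∈ Finset.Icc 1 k := by
      intro x hx
      exact (Finset.mem_filter.1 hx).2
    rw [← Finset.sum_fiberwise_of_maps_to hmap (fun x => (psi (L x)).re)]
    apply Finset.sum_congr rfl
    intro t ht
    have hff : (univ.filter (fun x : Fin m → ZMod 3 => hammingNorm x ∈ Finset.Icc 1 k)).filter
        (fun x => hammingNorm x = t) =
        univ.filter (fun x : Fin m → ZMod 3 => hammingNorm x = t) := by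
      rw [Finset.filter_filter]
      apply Finset.filter_congr
      intro x _
      constructor
      · rintro ⟨_, h⟩; exact h
      · intro h; exact ⟨h ▸ ht, h⟩
    rw [hff, hcoeff t]
  -- assemble
  have final : 2 * (walsh f v).re =
      2 * (∑ x : Fin m → ZMod 3, (psi (L x)).re)
        - 3 * ∑ x : Fin m → ZMod 3,
            (if hammingNorm x ∈ Finset.Icc 1 k then (1:ℝ) else 0) * (psi (L x)).re := by
    rw [h2W, Finset.mul_sum, Finset.mul_sum, ← Finset.sum_sub_distrib]
    apply Finset.sum_congr rfl
    intro x _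
    rw [hind x]
    ring
  rw [hfull, hicc] at final
  linarith
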